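/- Let C be a context with n holes, ℓ a non-variable term, and suppose ℓ matches C|_p (i.e., there is a substitution σ with ℓσ = C|_p, treating holes as constants). Then there exists a term c such that (1) ℓ matches c|_p and C = cσ_□ for some substitution σ (where σ_□ maps every variable in the domain of σ to □ and is the identity elsewhere), and (2) for every context D with C ⊑ D and ℓ matching D|_p, c matches D. -/

import Mathlib

/-- First-order terms over signature `F` and variables `V`. -/
inductive Tm (F V : Type) : Type
  | var : V → Tm F V
  | app : F → List (Tm F V) → Tm F V

namespace Tm

variable {F V G : Type}

/-- Applying a substitution to a term. -/
def subst (σ : V → Tm F V) : Tm F V → Tm F V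
  | var x => σ x
  | app f ts => app f (ts.attach.map (fun ⟨t, _⟩ => subst σ t))
  decreasing_by · simp only [Tm.app.sizeOf_spec]; have := List.sizeOf_lt_of_mem ‹_›; omega

/-- List of (occurrences of) variables of a term. -/
def vars : Tm F V → List V
  | var x => [x]
  | app _ ts => ts.attach.flatMap (fun ⟨t, _⟩ => vars t)
  decreasing_by · simp only [Tm.app.sizeOf_spec]; have := List.sizeOf_lt_of_mem ‹_›; omega

/-- Renaming the function symbols of a term. -/
def mapF (g : F → G) : Tm F V → Tm G V
  | var x => var x
  | app f ts => app (g f) (ts.attach.map (fun ⟨t, _⟩ => mapF g t))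
  decreasing_by · simp only [Tm.app.sizeOf_spec]; have := List.sizeOf_lt_of_mem ‹_›; omega

/-- The subterm at a position (a list of argument indices), if the position exists. -/
def sub : List Nat → Tm F V → Option (Tm F V)
  | [], t => some t
  | _ :: _, var _ => none
  | i :: p, app _ ts => (ts[i]?).bind (sub p)

/-- Replacing the subterm at a position by another term. -/
def repl : List Nat → Tm F V → Tm F V → Tm F V
  | [], _, u => u
  | _ :: _, var x, _ => var x
  | i :: p, app f ts, u =>
      app f (match ts[i]? with
             | some t => ts.set i (repl p t u)
             | none => ts)

end Tm

/-- A rewrite rule: a pair of terms. -/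
structure Rule (F V : Type) where
  lhs : Tm F V
  rhs : Tm F V

/-- The usual variable conditions on a rewrite rule: the left-hand side is
not a variable and all variables of the right-hand side occur in the left-hand side. -/
def WfRule {F V : Type} (ρ : Rule F V) : Prop :=
  (∀ x, ρ.lhs ≠ .var x) ∧ ∀ x, x ∈ ρ.rhs.vars → x ∈ ρ.lhs.vars

/-- `s` rewrites to `t` at position `p` using rule `ρ`. -/
def StepAt {F V : Type} (p : List Nat) (ρ : Rule F V) (s t : Tm F V) : Prop :=
  ∃ σ : V → Tm F V, Tm.sub p s = some (Tm.subst σ ρ.lhs) ∧ t = Tm.repl p s (Tm.subst σ ρ.rhs)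

/-- The rewrite relation of a TRS (set of rules). -/
def Step {F V : Type} (R : Set (Rule F V)) (s t : Tm F V) : Prop :=
  ∃ ρ ∈ R, ∃ p, StepAt p ρ s t

/-- `l` matches `t`: some substitution instance of `l` equals `t`. -/
def Matches {F V : Type} (l t : Tm F V) : Prop :=
  ∃ σ : V → Tm F V, Tm.subst σ l = t

/-- Reflexive-transitive closure of rewriting. -/
abbrev Steps {F V : Type} (R : Set (Rule F V)) : Tm F V → Tm F V → Prop :=
  Relation.ReflTransGen (Step R)

/-- Confluence on a set of terms. -/
def ConfluentOn {F V : Type} (R : Set (Rule F V)) (T : Set (Tm F V)) : Prop :=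
  ∀ s ∈ T, ∀ t u, Steps R s t → Steps R s u → ∃ v, Steps R t v ∧ Steps R u v

/-- Confluence (on all terms). -/
def Confluent {F V : Type} (R : Set (Rule F V)) : Prop :=
  ConfluentOn R Set.univ

/-- A relation is terminating if it admits no infinite sequences, i.e., its
inverse is well-founded. -/
def TerminatingRel {α : Type} (r : α → α → Prop) : Prop :=
  WellFounded (fun a b => r b a)

/-- One step of `A` relative to `B`: `→B* · →A · →B*`. -/
def RelStep {F V : Type} (A B : Set (Rule F V)) (s t : Tm F V) : Prop :=
  ∃ s' t', Steps B s s' ∧ Step A s' t' ∧ Steps B t' t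

/-- Relative termination of `A/B`. -/
def RelTerminating {F V : Type} (A B : Set (Rule F V)) : Prop :=
  TerminatingRel (RelStep A B)
/-- Contexts over `F` and `V`: terms over the signature extended with a
fresh hole constant (`Sum.inr ()`). -/
abbrev Ctx (F V : Type) := Tm (F ⊕ Unit) V

/-- The empty context (the hole). -/
def hole {F V : Type} : Ctx F V := Tm.app (Sum.inr ()) []

/-- A context with no holes, i.e., a term. -/
def noHole {F V : Type} (C : Ctx F V) : Prop :=
  ∀ p : List Nat, Tm.sub p C ≠ some (hole (F := F) (V := V))

/-- `p` is a position of `C` whose root is a function symbol (not a hole, not a variable). -/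
def funPos {F V : Type} (p : List Nat) (C : Ctx F V) : Prop :=
  ∃ (f : F) (ts : List (Ctx F V)), Tm.sub p C = some (Tm.app (Sum.inl f) ts)

/-- The partial order `⊑` on contexts: the smallest reflexive transitive
monotone relation with `hole ⊑ C` for every context `C`. -/
inductive CLe {F V : Type} : Ctx F V → Ctx F V → Prop
  | refl (C : Ctx F V) : CLe C C
  | hole (C : Ctx F V) : CLe hole C
  | trans {C D E : Ctx F V} : CLe C D → CLe D E → CLe C E
  | mono (f : F ⊕ Unit) {Cs Ds : List (Ctx F V)} :
      List.Forall₂ CLe Cs Ds → CLe (Tm.app f Cs) (Tm.app f Ds)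

/-- `M` is the merge (supremum w.r.t. `⊑`) of `C` and `D`. -/
def IsMerge {F V : Type} (C D M : Ctx F V) : Prop :=
  CLe C M ∧ CLe D M ∧ ∀ E, CLe C E → CLe D E → CLe M E

/-- `L` is a top of `C` according to `𝕃`. -/
def TopOf {F V : Type} (𝕃 : Set (Ctx F V)) (C L : Ctx F V) : Prop :=
  L ∈ 𝕃 ∧ CLe L C

/-- `M` is a max-top of `C` according to `𝕃`: a top maximal w.r.t. `⊑`. -/
def MaxTopOf {F V : Type} (𝕃 : Set (Ctx F V)) (C M : Ctx F V) : Prop :=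
  TopOf 𝕃 C M ∧ ∀ L, TopOf 𝕃 C L → CLe M L → L = M

/-- A layer system: a set of contexts satisfying (L1), (L2) and (L3). -/
structure LayerSystem {F V : Type} (𝕃 : Set (Ctx F V)) : Prop where
  /-- (L1): every term has a non-empty top. -/
  L1 : ∀ t : Ctx F V, noHole t → ∃ L, TopOf 𝕃 t L ∧ L ≠ hole
  /-- (L2): `C[x]_p ∈ 𝕃` iff `C[□]_p ∈ 𝕃`. -/
  L2 : ∀ (C : Ctx F V) (p : List Nat) (x : V), (Tm.sub p C).isSome →
        (Tm.repl p C (Tm.var x) ∈ 𝕃 ↔ Tm.repl p C hole ∈ 𝕃)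
  /-- (L3): layers are closed under merging at function positions. -/
  L3 : ∀ L ∈ 𝕃, ∀ N ∈ 𝕃, ∀ (p : List Nat) (Lp M : Ctx F V),
        funPos p L → Tm.sub p L = some Lp → IsMerge Lp N M → Tm.repl p L M ∈ 𝕃

/-- Condition (W): rewrite steps at function positions of the max-top can be
mirrored on the max-top, yielding a layer. -/
def CondW {F V : Type} (R : Set (Rule (F ⊕ Unit) V)) (𝕃 : Set (Ctx F V)) : Prop :=
  ∀ (s M : Ctx F V) (p : List Nat) (ρ : Rule (F ⊕ Unit) V) (t : Ctx F V),
    noHole s → MaxTopOf 𝕃 s M → funPos p M → ρ ∈ R → StepAt p ρ s t →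
    ∃ L ∈ 𝕃, StepAt p ρ M L

/-- Condition (C1): in (W), the resulting layer is the max-top of `t` or empty. -/
def CondC1 {F V : Type} (R : Set (Rule (F ⊕ Unit) V)) (𝕃 : Set (Ctx F V)) : Prop :=
  ∀ (s M : Ctx F V) (p : List Nat) (ρ : Rule (F ⊕ Unit) V) (t L : Ctx F V),
    noHole s → MaxTopOf 𝕃 s M → funPos p M → ρ ∈ R → StepAt p ρ s t →
    StepAt p ρ M L → L ∈ 𝕃 → (L = hole ∨ MaxTopOf 𝕃 t L)

/-- Condition (C2): if `L ⊑ N` are layers then filling a hole of `L` with the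
corresponding subcontext of `N` yields a layer. -/
def CondC2 {F V : Type} (𝕃 : Set (Ctx F V)) : Prop :=
  ∀ L ∈ 𝕃, ∀ N ∈ 𝕃, CLe L N → ∀ (p : List Nat) (Np : Ctx F V),
    Tm.sub p L = some (hole (F := F) (V := V)) → Tm.sub p N = some Np →
    Tm.repl p L Np ∈ 𝕃

/-- A TRS is weakly layered according to `𝕃` if (W) holds. -/
def WeaklyLayered {F V : Type} (R : Set (Rule (F ⊕ Unit) V)) (𝕃 : Set (Ctx F V)) : Prop :=
  CondW R 𝕃

/-- A TRS is layered according to `𝕃` if (W), (C1) and (C2) hold. -/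
def Layered {F V : Type} (R : Set (Rule (F ⊕ Unit) V)) (𝕃 : Set (Ctx F V)) : Prop :=
  CondW R 𝕃 ∧ CondC1 R 𝕃 ∧ CondC2 𝕃

/-- `HasRank 𝕃 t n`: the rank of `t` (according to the layer system `𝕃`) is `n`,
i.e., `n = 1 + max` of the ranks of the aliens of `t` (the subterms at the hole
positions of the max-top of `t`). -/
inductive HasRank {F V : Type} (𝕃 : Set (Ctx F V)) : Ctx F V → Nat → Prop
  | intro (t M : Ctx F V) (n : Nat) (rk : List Nat → Nat) :
      MaxTopOf 𝕃 t M →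
      (∀ (p : List Nat) (tp : Ctx F V), Tm.sub p M = some hole → Tm.sub p t = some tp →
        HasRank 𝕃 tp (rk p)) →
      (∀ p : List Nat, Tm.sub p M = some hole → rk p ≤ n) →
      (n = 0 ∨ ∃ (p : List Nat) (tp : Ctx F V), Tm.sub p M = some hole ∧
        Tm.sub p t = some tp ∧ rk p = n) →
      HasRank 𝕃 t (n + 1)
namespace Tm
variable {F V : Type}

theorem my_ind {motive : Tm F V → Prop} (hv : ∀ x, motive (var x))
    (ha : ∀ f ts, (∀ t ∈ ts, motive t) → motive (app f ts)) : ∀ t, motive t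
  | var x => hv x
  | app f ts => ha f ts (fun t _ => my_ind hv ha t)
  decreasing_by · simp only [Tm.app.sizeOf_spec]; have := List.sizeOf_lt_of_mem ‹_›; omega

@[simp] theorem subst_var (σ : V → Tm F V) (x : V) : subst σ (var x) = σ x := by
  rw [subst]

@[simp] theorem subst_app (σ : V → Tm F V) (f : F) (ts : List (Tm F V)) :
    subst σ (app f ts) = app f (ts.map (subst σ)) := by
  rw [subst]
  congr 1
  exact List.attach_map_val (l := ts) (f := subst σ) ▸ rfl

@[simp] theorem vars_var (x : V) : vars (F := F) (var x) = ([x] : List V) := by rw [vars]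

@[simp] theorem vars_app (f : F) (ts : List (Tm F V)) :
    vars (app f ts) = ts.flatMap vars := by
  rw [vars]
  have : ∀ l : List {x // x ∈ ts}, l.flatMap (fun t => vars t.1) = (l.map Subtype.val).flatMap vars := by
    intro l; induction l with
    | nil => rfl
    | cons a l ih => simp [List.flatMap_cons, ih]
  rw [this]; simp

end Tm
namespace Tm
variable {F V : Type}

theorem subst_subst (θ τ : V → Tm F V) (t : Tm F V) :
    subst θ (subst τ t) = subst (fun x => subst θ (τ x)) t := by
  induction t using my_ind with
  | hv x => simp
  | ha f ts ih =>
    simp only [subst_app, List.map_map]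
    congr 1
    exact List.map_congr_left fun t ht => ih t ht

theorem subst_congr {θ τ : V → Tm F V} {t : Tm F V}
    (h : ∀ x ∈ vars t, θ x = τ x) : subst θ t = subst τ t := by
  induction t using my_ind with
  | hv x => simpa using h x (by simp)
  | ha f ts ih =>
    simp only [subst_app]
    congr 1
    refine List.map_congr_left fun t ht => ih t ht fun x hx => h x ?_
    simp only [vars_app, List.mem_flatMap]
    exact ⟨t, ht, hx⟩

theorem vars_subst (σ : V → Tm F V) (t : Tm F V) :
    vars (subst σ t) = (vars t).flatMap (fun x => vars (σ x)) := by
  induction t using my_ind with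
  | hv x => simp
  | ha f ts ih =>
    simp only [subst_app, vars_app, List.flatMap_map, List.flatMap_assoc]
    exact List.flatMap_congr fun t ht => ih t ht  -- name guess

end Tm
namespace Tm
variable {F V : Type}

theorem mem_of_get? {α : Type _} {l : List α} {i : Nat} {a : α} (h : l[i]? = some a) : a ∈ l := by
  obtain ⟨hi, rfl⟩ := List.getElem?_eq_some_iff.1 h
  exact List.getElem_mem hi

/-- Hole-freeness, recursively. -/
def NH : Ctx F V → Prop
  | .var _ => True
  | .app f ts => (Tm.app f ts ≠ hole) ∧ ∀ t ∈ ts, NH t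
  decreasing_by · simp only [Tm.app.sizeOf_spec]; have := List.sizeOf_lt_of_mem ‹_›; omega

@[simp] theorem NH_var (x : V) : NH (F := F) (.var x) := by rw [NH]; trivial

theorem NH_app {f : F ⊕ Unit} {ts : List (Ctx F V)} :
    NH (Tm.app f ts) ↔ (Tm.app f ts ≠ hole) ∧ ∀ t ∈ ts, NH t := by rw [NH]

theorem NH_sub {t u : Ctx F V} {p : List Nat} (hs : Tm.sub p t = some u) (h : NH t) : NH u := by
  induction p generalizing t with
  | nil => rw [sub] at hs; cases hs; exact h
  | cons i p ih =>
    cases t with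
    | var x => rw [sub] at hs; cases hs
    | app f ts =>
      rw [sub] at hs
      cases hg : ts[i]? with
      | none => rw [hg] at hs; cases hs
      | some a =>
        rw [hg, Option.bind_some] at hs
        exact ih hs ((NH_app.1 h).2 a (mem_of_get? hg))

theorem noHole_of_NH {t : Ctx F V} (h : NH t) : noHole t := by
  intro p hp
  have := NH_sub hp h
  rw [show (hole : Ctx F V) = .app (Sum.inr ()) [] from rfl, NH_app] at this
  exact this.1 rfl

theorem NH_of_noHole {t : Ctx F V} (h : noHole t) : NH t := by
  induction t using my_ind with
  | hv x => simp
  | ha f ts ih =>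
    rw [NH_app]
    constructor
    · intro he; exact h [] (by rw [sub, he])
    · intro t ht
      refine ih t ht ?_
      obtain ⟨i, hi, rfl⟩ := List.getElem_of_mem ht
      intro p hp
      refine h (i :: p) ?_
      rw [sub, List.getElem?_eq_getElem hi, Option.bind_some]
      exact hp

theorem NH_subst {σ : V → Ctx F V} {t : Ctx F V} (ht : NH t) (hσ : ∀ x, NH (σ x)) :
    NH (subst σ t) := by
  induction t using my_ind with
  | hv x => simpa using hσ x
  | ha f ts ih =>
    rw [subst_app, NH_app]
    rw [NH_app] at ht
    constructor
    · intro he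
      injection he with h1 h2
      refine ht.1 ?_
      rw [h1]; congr 1; exact List.map_eq_nil_iff.mp h2  -- name guess
    · intro u hu
      obtain ⟨a, ha, rfl⟩ := List.mem_map.1 hu
      exact ih a ha (ht.2 a ha)

theorem NH_repl {t u : Ctx F V} {p : List Nat} (ht : NH t) (hu : NH u) : NH (repl p t u) := by
  induction p generalizing t with
  | nil => rw [repl]; exact hu
  | cons i p ih =>
    cases t with
    | var x => rw [repl]; simp
    | app f ts =>
      rw [repl]
      rw [NH_app] at ht
      cases hg : ts[i]? with
      | none => simpa [hg, NH_app] using ht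
      | some a =>
        simp only [hg]
        rw [NH_app]
        constructor
        · intro he
          injection he with h1 h2
          have hts : ts = [] := by
            have := congrArg List.length h2
            simpa using this
          subst hts; simp at hg
        · intro b hb
          rcases List.mem_or_eq_of_mem_set hb with h | h
          · exact ht.2 b h
          · subst h
            exact ih (ht.2 a (mem_of_get? hg))

end Tm
namespace Tm
variable {F V : Type}

theorem vars_sub {t u : Tm F V} {p : List Nat} (hs : sub p t = some u) :
    ∀ x ∈ vars u, x ∈ vars t := by
  induction p generalizing t with
  | nil => rw [sub] at hs; cases hs; exact fun x hx => hx
  | cons i p ih =>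
    cases t with
    | var x => rw [sub] at hs; cases hs
    | app f ts =>
      rw [sub] at hs
      cases hg : ts[i]? with
      | none => rw [hg] at hs; cases hs
      | some a =>
        rw [hg, Option.bind_some] at hs
        intro x hx
        simp only [vars_app, List.mem_flatMap]
        exact ⟨a, mem_of_get? hg, ih hs x hx⟩

theorem repl_self {t u : Tm F V} {p : List Nat} (hs : sub p t = some u) :
    repl p t u = t := by
  induction p generalizing t with
  | nil => rw [repl]; rw [sub] at hs; cases hs; rfl
  | cons i p ih =>
    cases t with
    | var x => rw [repl]
    | app f ts =>
      rw [sub] at hs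
      cases hg : ts[i]? with
      | none => rw [hg] at hs; cases hs
      | some a =>
        rw [hg, Option.bind_some] at hs
        rw [repl]; simp only [hg]
        congr 1
        rw [ih hs]
        obtain ⟨hi, rfl⟩ := List.getElem?_eq_some_iff.1 hg
        apply List.ext_getElem?; intro j
        rcases eq_or_ne j i with rfl | h
        · rw [List.getElem?_set_self hi, List.getElem?_eq_getElem hi]
        · rw [List.getElem?_set_ne h.symm]

theorem sub_repl {t u v : Tm F V} {p : List Nat} (hs : sub p t = some u) :
    sub p (repl p t v) = some v := by
  induction p generalizing t with
  | nil => rw [repl, sub]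
  | cons i p ih =>
    cases t with
    | var x => rw [sub] at hs; cases hs
    | app f ts =>
      rw [sub] at hs
      cases hg : ts[i]? with
      | none => rw [hg] at hs; cases hs
      | some a =>
        rw [hg, Option.bind_some] at hs
        rw [repl]; simp only [hg]; rw [sub]
        obtain ⟨hi, _⟩ := List.getElem?_eq_some_iff.1 hg
        rw [List.getElem?_set_self (by simpa using hi), Option.bind_some]
        exact ih hs

theorem subst_repl {t u v : Tm F V} {p : List Nat} (σ : V → Tm F V) (hs : sub p t = some u) :
    subst σ (repl p t v) = repl p (subst σ t) (subst σ v) := by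
  induction p generalizing t with
  | nil => rw [repl, repl]
  | cons i p ih =>
    cases t with
    | var x => rw [sub] at hs; cases hs
    | app f ts =>
      rw [sub] at hs
      cases hg : ts[i]? with
      | none => rw [hg] at hs; cases hs
      | some a =>
        rw [hg, Option.bind_some] at hs
        rw [repl]; simp only [hg]
        rw [subst_app, subst_app, repl]
        have hg' : (ts.map (subst σ))[i]? = some (subst σ a) := by
          rw [List.getElem?_map, hg, Option.map_some]
        simp only [hg']
        congr 1
        rw [List.map_set, ih hs]

end Tm
section CLeLemmas
variable {F V : Type}

theorem forall₂_cle_refl (ts : List (Ctx F V)) : List.Forall₂ CLe ts ts :=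
  List.forall₂_same.2 fun t _ => CLe.refl t

theorem forall₂_cle_trans {ts us vs : List (Ctx F V)}
    (h1 : List.Forall₂ CLe ts us) (h2 : List.Forall₂ CLe us vs) : List.Forall₂ CLe ts vs := by
  induction h1 generalizing vs with
  | nil => cases h2; exact List.Forall₂.nil
  | cons h hs ih =>
    cases h2 with
    | cons h' hs' => exact List.Forall₂.cons (CLe.trans h h') (ih hs')

theorem cle_cases {A B : Ctx F V} (h : CLe A B) :
    A = hole ∨ A = B ∨
      ∃ (f : F ⊕ Unit) (ts Bs : List (Ctx F V)),
        A = .app f ts ∧ B = .app f Bs ∧ List.Forall₂ CLe ts Bs := by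
  refine CLe.rec (motive_1 := fun A B _ => A = hole ∨ A = B ∨
      ∃ (f : F ⊕ Unit) (ts Bs : List (Ctx F V)),
        A = .app f ts ∧ B = .app f Bs ∧ List.Forall₂ CLe ts Bs)
    (motive_2 := fun _ _ _ => True) ?_ ?_ ?_ ?_ trivial (fun _ _ _ _ => trivial) h
  · exact fun C => Or.inr (Or.inl rfl)
  · exact fun C => Or.inl rfl
  · rintro A' B' E h1 h2 ih1 ih2
    rcases ih1 with h | h | ⟨f, ts, Bs, rfl, rfl, hf⟩
    · exact Or.inl h
    · rwa [h]
    · rcases ih2 with h | h | ⟨f', ts', Bs', he, rfl, hf'⟩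
      · rw [show (hole : Ctx F V) = .app (Sum.inr ()) [] from rfl] at h
        injection h with h1' h2'
        subst h1'; subst h2'
        cases hf
        exact Or.inl rfl
      · exact Or.inr (Or.inr ⟨f, ts, Bs, rfl, h ▸ rfl, hf⟩)
      · injection he with he1 he2
        subst he1; subst he2
        exact Or.inr (Or.inr ⟨f, ts, Bs', rfl, rfl, forall₂_cle_trans hf hf'⟩)
  · rintro f Cs Ds hf -
    exact Or.inr (Or.inr ⟨f, Cs, Ds, rfl, rfl, hf⟩)

/-- Inversion for `CLe` at an `app` on the left. -/
theorem cle_app_inv {f : F ⊕ Unit} {ts : List (Ctx F V)} {B : Ctx F V}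
    (h : CLe (.app f ts) B) :
    (f = Sum.inr () ∧ ts = []) ∨
      ∃ Bs, B = .app f Bs ∧ List.Forall₂ CLe ts Bs := by
  rcases cle_cases h with h | h | ⟨f', ts', Bs, he, rfl, hf⟩
  · rw [show (hole : Ctx F V) = .app (Sum.inr ()) [] from rfl] at h
    injection h with h1 h2
    exact Or.inl ⟨h1, h2⟩
  · exact Or.inr ⟨ts, h.symm, forall₂_cle_refl ts⟩
  · injection he with he1 he2
    subst he1; subst he2
    exact Or.inr ⟨Bs, rfl, hf⟩

theorem forall₂_get? {R : Ctx F V → Ctx F V → Prop} {l₁ l₂ : List (Ctx F V)}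
    (h : List.Forall₂ R l₁ l₂) {i : Nat} {a : Ctx F V} (ha : l₁[i]? = some a) :
    ∃ b, l₂[i]? = some b ∧ R a b := by
  induction h generalizing i with
  | nil => simp at ha
  | cons hr hs ih =>
    cases i with
    | zero => exact ⟨_, rfl, by simpa using (by simpa using ha) ▸ hr⟩
    | succ i => exact ih ha

theorem cle_sub {C D Cp : Ctx F V} {p : List Nat} (h : CLe C D) (hp : Tm.sub p C = some Cp) :
    ∃ Dp, Tm.sub p D = some Dp ∧ CLe Cp Dp := by
  induction p generalizing C D with
  | nil => rw [Tm.sub] at hp; cases hp; exact ⟨D, rfl, h⟩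
  | cons i p ih =>
    cases C with
    | var x => rw [Tm.sub] at hp; cases hp
    | app f ts =>
      rw [Tm.sub] at hp
      cases hg : ts[i]? with
      | none => rw [hg] at hp; cases hp
      | some a =>
        rw [hg, Option.bind_some] at hp
        rcases cle_app_inv h with ⟨rfl, rfl⟩ | ⟨Bs, rfl, hf⟩
        · simp at hg
        · obtain ⟨b, hb, hab⟩ := forall₂_get? hf hg
          obtain ⟨Dp, hDp, hle⟩ := ih hab hp
          refine ⟨Dp, ?_, hle⟩
          rw [Tm.sub, hb, Option.bind_some]
          exact hDp

theorem cle_subst_var {σ τ : V → Ctx F V} :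
    ∀ {t : Ctx F V}, Tm.NH t → CLe (Tm.subst σ t) (Tm.subst τ t) →
      ∀ x ∈ Tm.vars t, CLe (σ x) (τ x) := by
  intro t
  induction t using Tm.my_ind with
  | hv y =>
    intro _ h x hx
    simp only [Tm.vars_var, List.mem_singleton] at hx
    subst hx
    simpa using h
  | ha f ts ih =>
    intro hnh h x hx
    rw [Tm.subst_app, Tm.subst_app] at h
    rcases cle_app_inv h with ⟨rfl, hnil⟩ | ⟨Bs, hB, hf⟩
    · have : ts = [] := by simpa using hnil
      subst this
      exact absurd rfl (Tm.NH_app.1 hnh).1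
    · injection hB with _ hB2
      subst hB2
      simp only [Tm.vars_app, List.mem_flatMap] at hx
      obtain ⟨a, ha, hxa⟩ := hx
      obtain ⟨i, hi, rfl⟩ := List.getElem_of_mem ha
      have hg : (ts.map (Tm.subst σ))[i]? = some (Tm.subst σ ts[i]) := by
        simp [List.getElem?_eq_getElem hi]
      obtain ⟨b, hb, hab⟩ := forall₂_get? hf hg
      have hb' : b = Tm.subst τ ts[i] := by
        simp [List.getElem?_eq_getElem hi] at hb
        exact hb.symm
      subst hb'
      exact ih ts[i] (List.getElem_mem hi) ((Tm.NH_app.1 hnh).2 _ (List.getElem_mem hi)) hab x hxa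

end CLeLemmas
namespace Tm
variable {F V : Type}

/-- Replace each hole of a context by a variable named after its position. -/
def fill (h : List Nat → V) : Ctx F V → Ctx F V
  | .var x => .var x
  | .app (Sum.inr ()) [] => .var (h [])
  | .app f ts => .app f (ts.attach.mapIdx fun i t => fill (fun q => h (i :: q)) t.1)
  decreasing_by · simp only [Tm.app.sizeOf_spec]; have := List.sizeOf_lt_of_mem t.2; omega

@[simp] theorem fill_var (h : List Nat → V) (x : V) : fill (F := F) h (.var x) = .var x := by
  rw [fill]

@[simp] theorem fill_hole (h : List Nat → V) : fill (F := F) h hole = .var (h []) := by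
  rw [show (hole : Ctx F V) = .app (Sum.inr ()) [] from rfl, fill]

theorem attach_mapIdx {α β : Type _} (l : List α) (g : Nat → α → β) :
    (l.attach.mapIdx fun i t => g i t.1) = l.mapIdx g := by
  apply List.ext_getElem?
  intro i
  simp only [List.getElem?_mapIdx, List.getElem?_attach, Option.map_pmap]
  exact Option.pmap_eq_map _ _ _ _

theorem fill_app {h : List Nat → V} {f : F ⊕ Unit} {ts : List (Ctx F V)}
    (hne : ¬(f = Sum.inr () ∧ ts = [])) :
    fill h (.app f ts) = .app f (ts.mapIdx fun i t => fill (fun q => h (i :: q)) t) := by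
  rw [← attach_mapIdx ts (fun i t => fill (fun q => h (i :: q)) t)]
  match f, ts with
  | Sum.inl g, ts => rw [fill]; simp
  | Sum.inr (), [] => exact absurd ⟨rfl, rfl⟩ hne
  | Sum.inr (), t :: ts => rw [fill]; simp

end Tm
namespace Tm
variable {F V : Type}

theorem NH_fill (h : List Nat → V) (A : Ctx F V) : NH (fill h A) := by
  induction A using my_ind generalizing h with
  | hv x => simp
  | ha f ts ih =>
    by_cases hc : f = Sum.inr () ∧ ts = []
    · obtain ⟨rfl, rfl⟩ := hc
      rw [show Tm.app (Sum.inr ()) ([] : List (Ctx F V)) = hole from rfl, fill_hole]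
      simp
    · rw [fill_app hc, NH_app]
      constructor
      · intro he
        injection he with h1 h2
        refine hc ⟨h1, ?_⟩
        simpa using congrArg List.length h2
      · intro t ht
        have : ∃ i, ∃ hi : i < ts.length, t = fill (fun q => h (i :: q)) ts[i] := by
          obtain ⟨i, hi, he⟩ := List.getElem_of_mem ht
          simp only [List.length_mapIdx] at hi
          refine ⟨i, hi, ?_⟩
          rw [← he, List.getElem_mapIdx]
        obtain ⟨i, hi, rfl⟩ := this
        exact ih ts[i] (List.getElem_mem hi) _

theorem sub_fill {C Cp : Ctx F V} {p : List Nat} (h : List Nat → V)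
    (hp : sub p C = some Cp) :
    sub p (fill h C) = some (fill (fun q => h (p ++ q)) Cp) := by
  induction p generalizing C h with
  | nil => rw [sub] at hp; cases hp; rw [sub]; rfl
  | cons i p ih =>
    cases C with
    | var x => rw [sub] at hp; cases hp
    | app f ts =>
      rw [sub] at hp
      cases hg : ts[i]? with
      | none => rw [hg] at hp; cases hp
      | some a =>
        rw [hg, Option.bind_some] at hp
        have hne : ¬(f = Sum.inr () ∧ ts = []) := by
          rintro ⟨-, rfl⟩; simp at hg
        rw [fill_app hne, sub]
        rw [List.getElem?_mapIdx, hg, Option.map_some, Option.bind_some]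
        exact ih _ hp

end Tm
namespace Tm
variable {F V : Type}

theorem subst_fill_of_cle (θ : V → Ctx F V) :
    ∀ (A : Ctx F V) (B : Ctx F V) (h : List Nat → V), CLe A B →
      (∀ (q : List Nat) (Bq : Ctx F V), sub q A = some hole → sub q B = some Bq →
        θ (h q) = Bq) →
      (∀ y ∈ vars A, θ y = var y) →
      subst θ (fill h A) = B := by
  intro A
  induction A using my_ind with
  | hv x =>
    intro B h hle hhole hvars
    rcases cle_cases hle with hc | hc | ⟨f, ts, Bs, hc, _, _⟩
    · cases hc
    · subst hc
      rw [fill_var, subst_var]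
      exact hvars x (by simp)
    · cases hc
  | ha f ts ih =>
    intro B h hle hhole hvars
    by_cases hc : f = Sum.inr () ∧ ts = []
    · obtain ⟨rfl, rfl⟩ := hc
      rw [show Tm.app (Sum.inr ()) ([] : List (Ctx F V)) = hole from rfl, fill_hole, subst_var]
      exact hhole [] B rfl rfl
    · rcases cle_app_inv hle with hc' | ⟨Bs, rfl, hf⟩
      · exact absurd hc' hc
      · rw [fill_app hc, subst_app]
        congr 1
        have hlen : ts.length = Bs.length := hf.length_eq
        apply List.ext_getElem?
        intro i
        rcases Nat.lt_or_ge i ts.length with hi | hi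
        · have hBi : i < Bs.length := hlen ▸ hi
          rw [List.getElem?_map, List.getElem?_mapIdx,
            List.getElem?_eq_getElem hi, List.getElem?_eq_getElem hBi,
            Option.map_some, Option.map_some]
          congr 1
          have hR : CLe ts[i] Bs[i] := by
            obtain ⟨b, hb, hab⟩ := forall₂_get? hf
              (by rw [List.getElem?_eq_getElem hi] : ts[i]? = some ts[i])
            rw [List.getElem?_eq_getElem hBi] at hb
            exact (Option.some.inj hb) ▸ hab
          refine ih ts[i] (List.getElem_mem hi) Bs[i] _ hR ?_ ?_
          · intro q Bq hq hBq
            refine hhole (i :: q) Bq ?_ ?_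
            · rw [sub, List.getElem?_eq_getElem hi, Option.bind_some]
              exact hq
            · rw [sub, List.getElem?_eq_getElem hBi, Option.bind_some]
              exact hBq
          · intro y hy
            refine hvars y ?_
            simp only [vars_app, List.mem_flatMap]
            exact ⟨ts[i], List.getElem_mem hi, hy⟩
        · rw [List.getElem?_map, List.getElem?_mapIdx,
            List.getElem?_eq_none hi, List.getElem?_eq_none (by omega), Option.map_none, Option.map_none]

end Tm
section Fresh

theorem list_le_foldr_max (l : List ℕ) : ∀ n ∈ l, n ≤ l.foldr max 0 := by
  induction l with
  | nil => simp
  | cons a l ih =>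
    intro n hn
    rcases List.mem_cons.1 hn with rfl | hn
    · exact le_max_left _ _
    · exact le_trans (ih n hn) (le_max_right _ _)

theorem exists_fresh_injection (V : Type) [Countable V] [Infinite V] (S : List V) :
    ∃ g : (List Nat ⊕ V × List Nat) → V, Function.Injective g ∧ ∀ a, g a ∉ S := by
  have hE : Encodable V := Encodable.ofCountable V
  have hD : Denumerable V := @Denumerable.ofEncodableOfInfinite V hE _
  let e : V ≃ ℕ := Denumerable.eqv V
  obtain ⟨j, hj⟩ := exists_injective_nat (List Nat ⊕ V × List Nat)
  set N : ℕ := ((S.map e).foldr max 0) + 1 with hN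
  refine ⟨fun a => e.symm (j a + N), ?_, ?_⟩
  · intro a b hab
    have := congrArg e hab
    simp only [Equiv.apply_symm_apply] at this
    exact hj (by omega)
  · intro a ha
    have h1 : e (e.symm (j a + N)) ∈ S.map e := List.mem_map_of_mem (f := e) ha
    rw [Equiv.apply_symm_apply] at h1
    have := list_le_foldr_max (S.map e) _ h1
    omega

end Fresh

/-- if a non-variable term `ℓ` matches the subterm of a context `C`
at position `p`, then there is a term `c` such that (1) `ℓ` matches `c|_p` and
`C = c σ_□` for a substitution mapping each variable to itself or to the hole,
and (2) `c` matches every context `D ⊒ C` with `ℓ` matching `D|_p`. -/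
theorem context_instance (F V : Type) [Countable V] [Infinite V]
    (C : Ctx F V) (p : List Nat) (ℓ Cp : Ctx F V)
    (hℓterm : noHole ℓ) (hℓvar : ∀ x : V, ℓ ≠ Tm.var x)
    (hp : Tm.sub p C = some Cp) (hm : Matches ℓ Cp) :
    ∃ c : Ctx F V, noHole c ∧
      (∃ cp : Ctx F V, Tm.sub p c = some cp ∧ Matches ℓ cp) ∧
      (∃ σ : V → Ctx F V, (∀ x : V, σ x = hole ∨ σ x = Tm.var x) ∧ Tm.subst σ c = C) ∧
      (∀ D Dp : Ctx F V, CLe C D → Tm.sub p D = some Dp → Matches ℓ Dp → Matches c D) := by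
  classical
  obtain ⟨σ₀, hσ₀⟩ := hm
  have NHℓ : Tm.NH ℓ := Tm.NH_of_noHole hℓterm
  obtain ⟨g, hginj, hgS⟩ := exists_fresh_injection V (Tm.vars C)
  -- vars of σ₀ x (for x ∈ vars ℓ) are among vars C
  have hvarsσ : ∀ x ∈ Tm.vars ℓ, ∀ y ∈ Tm.vars (σ₀ x), y ∈ Tm.vars C := by
    intro x hx y hy
    refine Tm.vars_sub hp y ?_
    rw [← hσ₀, Tm.vars_subst]
    exact List.mem_flatMap.2 ⟨x, hx, hy⟩
  set τ : V → Ctx F V := fun x => Tm.fill (fun r => g (Sum.inr (x, r))) (σ₀ x) with hτ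
  have hsf : Tm.sub p (Tm.fill (fun q => g (Sum.inl q)) C)
      = some (Tm.fill (fun q => g (Sum.inl (p ++ q))) Cp) :=
    Tm.sub_fill _ hp
  refine ⟨Tm.repl p (Tm.fill (fun q => g (Sum.inl q)) C) (Tm.subst τ ℓ), ?_, ?_, ?_, ?_⟩
  · exact Tm.noHole_of_NH (Tm.NH_repl (Tm.NH_fill _ C)
      (Tm.NH_subst NHℓ (fun x => Tm.NH_fill _ _)))
  · exact ⟨Tm.subst τ ℓ, Tm.sub_repl hsf, τ, rfl⟩
  · refine ⟨fun v => if h : ∃ a, g a = v then hole else Tm.var v, ?_, ?_⟩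
    · intro x
      by_cases h : ∃ a, g a = x
      · left; simp [h]
      · right; simp [h]
    · rw [Tm.subst_repl _ hsf]
      have hA : Tm.subst (fun v => if h : ∃ a, g a = v then hole else Tm.var v)
          (Tm.fill (fun q => g (Sum.inl q)) C) = C := by
        refine Tm.subst_fill_of_cle _ C C _ (CLe.refl C) ?_ ?_
        · intro q Bq hq hBq
          rw [hq] at hBq
          have hBq' : Bq = hole := (Option.some.inj hBq).symm
          subst hBq'
          exact dif_pos ⟨Sum.inl q, rfl⟩
        · intro y hy
          exact dif_neg (fun ⟨a, ha⟩ => hgS a (ha ▸ hy))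
      have hB : Tm.subst (fun v => if h : ∃ a, g a = v then hole else Tm.var v)
          (Tm.subst τ ℓ) = Cp := by
        rw [Tm.subst_subst]
        have hpt : ∀ x ∈ Tm.vars ℓ,
            Tm.subst (fun v => if h : ∃ a, g a = v then hole else Tm.var v) (τ x) = σ₀ x := by
          intro x hx
          refine Tm.subst_fill_of_cle _ (σ₀ x) (σ₀ x) _ (CLe.refl _) ?_ ?_
          · intro r Bq hr hBq
            rw [hr] at hBq
            have hBq' : Bq = hole := (Option.some.inj hBq).symm
            subst hBq'
            exact dif_pos ⟨Sum.inr (x, r), rfl⟩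
          · intro y hy
            exact dif_neg (fun ⟨a, ha⟩ => hgS a (ha ▸ hvarsσ x hx y hy))
        rw [Tm.subst_congr hpt, hσ₀]
      rw [hA, hB, Tm.repl_self hp]
  · intro D Dp hCD hpD hmD
    obtain ⟨μ, hμ⟩ := hmD
    obtain ⟨Dp', hDp', hleCp⟩ := cle_sub hCD hp
    have hDe : Dp' = Dp := by rw [hpD] at hDp'; exact (Option.some.inj hDp').symm
    rw [hDe] at hleCp
    have hxl : ∀ x ∈ Tm.vars ℓ, CLe (σ₀ x) (μ x) :=
      cle_subst_var NHℓ (by rw [hσ₀, hμ]; exact hleCp)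
    set θ : V → Ctx F V := fun v =>
      if h : ∃ a, g a = v then
        (match Classical.choose h with
         | Sum.inl q => (Tm.sub q D).getD hole
         | Sum.inr (x, r) => (Tm.sub r (μ x)).getD hole)
      else Tm.var v with hθ
    have key : ∀ a, θ (g a) =
        (match a with
         | Sum.inl q => (Tm.sub q D).getD hole
         | Sum.inr (x, r) => (Tm.sub r (μ x)).getD hole) := by
      intro a
      have hex : ∃ a', g a' = g a := ⟨a, rfl⟩
      rw [hθ]
      simp only [dif_pos hex]
      exact congrArg (fun z => match z with
        | Sum.inl q => (Tm.sub q D).getD hole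
        | Sum.inr (x, r) => (Tm.sub r (μ x)).getD hole) (hginj (Classical.choose_spec hex))
    have θvar : ∀ y ∈ Tm.vars C, θ y = Tm.var y := by
      intro y hy
      rw [hθ]
      exact dif_neg (fun ⟨a, ha⟩ => hgS a (ha ▸ hy))
    refine ⟨θ, ?_⟩
    rw [Tm.subst_repl _ hsf]
    have hA : Tm.subst θ (Tm.fill (fun q => g (Sum.inl q)) C) = D := by
      refine Tm.subst_fill_of_cle _ C D _ hCD ?_ θvar
      intro q Bq hq hBq
      have hthis : θ (g (Sum.inl q)) = (Tm.sub q D).getD hole := key (Sum.inl q)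
      rw [hBq] at hthis
      simpa using hthis
    have hB : Tm.subst θ (Tm.subst τ ℓ) = Dp := by
      rw [Tm.subst_subst]
      have hpt : ∀ x ∈ Tm.vars ℓ, Tm.subst θ (τ x) = μ x := by
        intro x hx
        refine Tm.subst_fill_of_cle _ (σ₀ x) (μ x) _ (hxl x hx) ?_ ?_
        · intro r Bq hr hBq
          have hthis : θ (g (Sum.inr (x, r))) = (Tm.sub r (μ x)).getD hole := key (Sum.inr (x, r))
          rw [hBq] at hthis
          simpa using hthis
        · intro y hy
          exact θvar y (hvarsσ x hx y hy)
      rw [Tm.subst_congr hpt, hμ]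
    rw [hA, hB, Tm.repl_self hpD]
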